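/- Let N ≥ 1, let Σ be a symmetric N×N real matrix with Σ[i,i] > 0 for every i, set σ_i = √(Σ[i,i]) and r_{ij} = Σ[i,j]/(σ_i σ_j). Fix indices k₁ and k' with r_{k' k₁}² < 1, let β > 0, τ_{k'} ∈ ℕ, and p ∈ ℝ^N. Define Σ̃[i,j] = Σ[i,j] − Σ[i,k₁]·Σ[k₁,j]/Σ[k₁,k₁] and σ̃_{k'} = √(Σ̃[k',k']). Then β^{τ_{k'}} · (∑_{i=1}^{N} p_i·Σ̃[i,k']) / σ̃_{k'} = (β^{τ_{k'}} / √(1 − r_{k' k₁}²)) · ( ∑_{i=1}^{N} p_i·r_{i k'}·σ_i − r_{k₁ k'}·∑_{i=1}^{N} p_i·r_{i k₁}·σ_i ). -/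

import Mathlib

/-- Second claim (Eq. 21) of Lemma 3 of FedGP: the selection score of a candidate second
client `k'` computed with the posterior covariance `Σ̃` factorizes as
`β^{τ k'} / √(1 − r k' k₁ ^ 2) * (∑ i, p i r i k' σ i − r k₁ k' ∑ i, p i r i k₁ σ i)`. -/
theorem stmt_8 {N : ℕ} (hN : 1 ≤ N) (V : Matrix (Fin N) (Fin N) ℝ)
    (hsymm : V.IsSymm) (hdiag : ∀ i, 0 < V i i)
    (σ : Fin N → ℝ) (hσ : ∀ i, σ i = Real.sqrt (V i i))
    (r : Fin N → Fin N → ℝ) (hr : ∀ i j, r i j = V i j / (σ i * σ j))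
    (k₁ k' : Fin N) (hcorr : r k' k₁ ^ 2 < 1)
    (β : ℝ) (hβ : 0 < β) (τk' : ℕ) (p : Fin N → ℝ)
    (Vpost : Matrix (Fin N) (Fin N) ℝ)
    (hVpost : ∀ i j, Vpost i j = V i j - V i k₁ * V k₁ j / V k₁ k₁)
    (σpost : ℝ) (hσpost : σpost = Real.sqrt (Vpost k' k')) :
    β ^ τk' * (∑ i, p i * Vpost i k') / σpost =
      β ^ τk' / Real.sqrt (1 - r k' k₁ ^ 2) *
        ((∑ i, p i * r i k' * σ i) - r k₁ k' * ∑ i, p i * r i k₁ * σ i) := by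
  have hσpos : ∀ i, 0 < σ i := fun i => (hσ i) ▸ Real.sqrt_pos.mpr (hdiag i)
  have hσsq : ∀ i, σ i ^ 2 = V i i := by
    intro i; rw [hσ i, Real.sq_sqrt (hdiag i).le]
  have hVr : ∀ i j, V i j = r i j * σ i * σ j := by
    intro i j
    rw [hr]
    field_simp [(hσpos i).ne', (hσpos j).ne']
  have hsym : ∀ i j, V i j = V j i := fun i j => (congrFun (congrFun hsymm j) i : V i j = V j i)
  have hrsym : r k' k₁ = r k₁ k' := by
    rw [hr, hr, hsym k' k₁, mul_comm]
  -- posterior variance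
  have hcpos : 0 < 1 - r k' k₁ ^ 2 := by linarith
  have hVk : Vpost k' k' = σ k' ^ 2 * (1 - r k' k₁ ^ 2) := by
    rw [hVpost, hVr k' k₁, hVr k₁ k', ← hσsq k₁, ← hσsq k', hrsym]
    have := (hσpos k₁).ne'
    field_simp
  have hσpost : σpost = σ k' * Real.sqrt (1 - r k' k₁ ^ 2) := by
    rw [hσpost, hVk, Real.sqrt_mul (sq_nonneg _), Real.sqrt_sq (hσpos k').le]
  -- sum
  have hsum : (∑ i, p i * Vpost i k') =
      σ k' * ((∑ i, p i * r i k' * σ i) - r k₁ k' * ∑ i, p i * r i k₁ * σ i) := by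
    have key : ∀ i, p i * Vpost i k' =
        σ k' * (p i * r i k' * σ i) - σ k' * r k₁ k' * (p i * r i k₁ * σ i) := by
      intro i
      rw [hVpost, hVr i k₁, hVr k₁ k', ← hσsq k₁, hVr i k']
      have := (hσpos k₁).ne'
      field_simp
    simp_rw [key]
    rw [Finset.sum_sub_distrib, ← Finset.mul_sum, ← Finset.mul_sum]
    ring
  have hspos : 0 < Real.sqrt (1 - r k' k₁ ^ 2) := Real.sqrt_pos.mpr hcpos
  rw [hsum, hσpost]
  field_simp [(hσpos k').ne', hspos.ne']
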